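/- Let n ≥ 1. The assignment [k_n, k_{n−1}, …, k_1] ↦ O_w, where w = c_{k_n,n} c_{k_{n−1},n−1} ⋯ c_{k_1,1}, is a bijection from the set of admissible sequences of nonnegative integers of length n onto the set of double cosets {O_σ : σ ∈ S_{2n}} of the subgroup S in S_{2n}. -/

import Mathlib

/-- The subgroup `S ⊆ S_{2n}` of permutations fixing each of the last `n` points
(`n+1, …, 2n` in one-based terms, i.e. the indices `i` with `n ≤ i` in zero-based terms). -/
def Sfix (n : ℕ) : Set (Equiv.Perm (Fin (2 * n))) :=
  {g | ∀ i : Fin (2 * n), n ≤ (i : ℕ) → g i = i}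

/-- The double coset `O_σ = {g σ h : g, h ∈ S}`. -/
def dcoset (n : ℕ) (σ : Equiv.Perm (Fin (2 * n))) : Set (Equiv.Perm (Fin (2 * n))) :=
  {t | ∃ g ∈ Sfix n, ∃ h ∈ Sfix n, t = g * σ * h}

/-- The length of a permutation: its number of inversions. -/
noncomputable def len (n : ℕ) (σ : Equiv.Perm (Fin (2 * n))) : ℕ :=
  {p : Fin (2 * n) × Fin (2 * n) | p.1 < p.2 ∧ σ p.2 < σ p.1}.ncard

/-- The adjacent transposition `s_i = (i, i+1)` of `{1, …, m}` (one-based), i.e. the swap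
of the zero-based positions `i-1` and `i`; it is the identity for out-of-range `i`. -/
def sTrans (m i : ℕ) : Equiv.Perm (Fin m) :=
  if h : 1 ≤ i ∧ i < m then
    Equiv.swap ⟨i - 1, by omega⟩ ⟨i, h.2⟩
  else 1

/-- The cycle `c_{k,j} = s_{j+n-k} s_{j+n-k+1} ⋯ s_{j+n-1} ∈ S_{2n}` (with `c_{0,j} = e`). -/
def cyc (n k j : ℕ) : Equiv.Perm (Fin (2 * n)) :=
  ((List.range k).map fun t => sTrans (2 * n) (j + n - k + t)).prod

/-- The product `c_{k_n,n} c_{k_{n-1},n-1} ⋯ c_{k_1,1} ∈ S_{2n}` associated to a sequence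
`[k_n, …, k_1]` (encoded as a function `k : ℕ → ℕ` on the indices `1, …, n`). -/
def cycProd (n : ℕ) (k : ℕ → ℕ) : Equiv.Perm (Fin (2 * n)) :=
  ((List.range n).map fun t => cyc n (k (n - t)) (n - t)).prod

/-- The bound `max (max_{j < i ≤ n} (k_i + j + 1 - i)) j` appearing in admissibility. -/
def admBound (n : ℕ) (k : ℕ → ℕ) (j : ℕ) : ℕ :=
  max ((Finset.Ioc j n).sup fun i => k i + j + 1 - i) j

/-- A sequence `[k_n, …, k_1]` of nonnegative integers is admissible if
`k_j ≤ max (max_{j < i ≤ n} (k_i + j + 1 - i)) j` for every `1 ≤ j ≤ n`. -/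
def Admissible (n : ℕ) (k : ℕ → ℕ) : Prop :=
  ∀ j, 1 ≤ j → j ≤ n → k j ≤ admBound n k j

namespace AdmAux

lemma downInd {n : ℕ} {P : ℕ → Prop} (hn : P n) (hstep : ∀ j, j < n → P (j + 1) → P j) :
    ∀ j, j ≤ n → P j := by
  have key : ∀ d j, j + d = n → P j := by
    intro d
    induction d with
    | zero => intro j h; simpa [show j = n by omega] using hn
    | succ d ih => intro j h; exact hstep j (by omega) (ih (j + 1) (by omega))
  exact fun j hj => key (n - j) j (by omega)

/-- one scalar step: the effect of `c_{k_i,i}` on a running value `x ≤ n+i-2` (zero-based). -/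
def stepF (n : ℕ) (k : ℕ → ℕ) (i x : ℕ) : ℕ := if n + i ≤ x + k i + 1 then x + 1 else x

/-- scalar model of applying `c_{k_n,n} ∘ ⋯ ∘ c_{k_{j+1},j+1}` to a small value. -/
def phi (n : ℕ) (k : ℕ → ℕ) : ℕ → ℕ → ℕ
  | j, x => if _h : j < n then phi n k (j + 1) (stepF n k (j + 1) x) else x
  termination_by j _ => n - j

lemma phi_of_lt {n : ℕ} {k : ℕ → ℕ} {j : ℕ} (h : j < n) (x : ℕ) :
    phi n k j x = phi n k (j + 1) (stepF n k (j + 1) x) := by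
  rw [phi]; simp [h]

lemma phi_of_ge {n : ℕ} {k : ℕ → ℕ} {j : ℕ} (h : n ≤ j) (x : ℕ) : phi n k j x = x := by
  rw [phi]; simp [Nat.not_lt.2 h]

lemma stepF_strictMono {n : ℕ} {k : ℕ → ℕ} {i : ℕ} : StrictMono (stepF n k i) := by
  intro x y hxy; unfold stepF; split_ifs <;> omega

lemma phi_strictMono {n : ℕ} (k : ℕ → ℕ) : ∀ j, j ≤ n → StrictMono (phi n k j) := by
  refine downInd (by intro x y h; rwa [phi_of_ge le_rfl, phi_of_ge le_rfl]) ?_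
  intro j hj ih x y hxy
  rw [phi_of_lt hj, phi_of_lt hj]
  exact ih (stepF_strictMono hxy)

lemma phi_strictMono' (n : ℕ) (k : ℕ → ℕ) (j : ℕ) : StrictMono (phi n k j) := by
  rcases le_or_gt j n with h | h
  · exact phi_strictMono k j h
  · intro x y hxy; rwa [phi_of_ge h.le, phi_of_ge h.le]

lemma phi_inj (n : ℕ) (k : ℕ → ℕ) (j : ℕ) : Function.Injective (phi n k j) :=
  (phi_strictMono' n k j).injective

lemma phi_le {n : ℕ} (k : ℕ → ℕ) : ∀ j x, x ≤ phi n k j x ∧ phi n k j x ≤ x + (n - j) := by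
  have key : ∀ d j x, n - j ≤ d → x ≤ phi n k j x ∧ phi n k j x ≤ x + (n - j) := by
    intro d
    induction d with
    | zero => intro j x h; rw [phi_of_ge (by omega)]; omega
    | succ d ih =>
      intro j x h
      rcases le_or_gt n j with h' | h'
      · rw [phi_of_ge h']; omega
      · rw [phi_of_lt h']
        have := ih (j + 1) (stepF n k (j + 1) x) (by omega)
        have hs : x ≤ stepF n k (j + 1) x ∧ stepF n k (j + 1) x ≤ x + 1 := by
          unfold stepF; split_ifs <;> omega
        omega
  exact fun j x => key (n - j) j x le_rfl

lemma admBound_self (n : ℕ) (k : ℕ → ℕ) : admBound n k n = n := by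
  simp [admBound]

lemma admBound_ge (n : ℕ) (k : ℕ → ℕ) (j : ℕ) : j ≤ admBound n k j := le_max_right _ _

lemma admBound_rec (n : ℕ) (k : ℕ → ℕ) {j : ℕ} (hj : j < n) :
    admBound n k j = max (admBound n k (j + 1) - 1) (k (j + 1)) := by
  have hins : Finset.Ioc j n = insert (j + 1) (Finset.Ioc (j + 1) n) := by
    ext i; simp [Finset.mem_Ioc]; omega
  rw [admBound, hins, Finset.sup_insert]
  have hcomp : ((Finset.Ioc (j + 1) n).sup fun i => k i + j + 1 - i)
      = ((Finset.Ioc (j + 1) n).sup fun i => k i + (j + 1) + 1 - i) - 1 := by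
    have h2 := Finset.comp_sup_eq_sup_comp (s := Finset.Ioc (j + 1) n)
      (f := fun i => k i + (j + 1) + 1 - i) (g := fun x => x - 1)
      (fun x y => by
        show (max x y) - 1 = max (x - 1) (y - 1)
        omega) rfl
    rw [h2]
    apply Finset.sup_congr rfl
    intro i hi
    simp only [Finset.mem_Ioc] at hi
    simp only [Function.comp]
    omega
  rw [hcomp, admBound]
  omega

lemma admBound_le (n : ℕ) {k : ℕ → ℕ} (H : Admissible n k) :
    ∀ j, j ≤ n → admBound n k j ≤ n := by
  refine downInd (by rw [admBound_self]) ?_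
  intro j hj ih
  rw [admBound_rec n k hj]
  have := H (j + 1) (by omega) (by omega)
  omega

lemma k_le (n : ℕ) {k : ℕ → ℕ} (H : Admissible n k) {j : ℕ} (h1 : 1 ≤ j) (h2 : j ≤ n) :
    k j ≤ n := (H j h1 h2).trans (admBound_le n H j h2)

/-- key lemma: the image of `x` is low iff `x` is below the threshold `n+j-B_j`. -/
lemma phi_lt_iff (n : ℕ) {k : ℕ → ℕ} (H : Admissible n k) :
    ∀ j, j ≤ n → ∀ x, phi n k j x < n ↔ x + admBound n k j < n + j := by
  refine downInd ?_ ?_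
  · intro x; rw [phi_of_ge le_rfl, admBound_self]; omega
  · intro j hj ih x
    rw [phi_of_lt hj, ih (stepF n k (j + 1) x), admBound_rec n k hj]
    have h1 := H (j + 1) (by omega) (by omega)
    have h2 := admBound_le n H (j + 1) (by omega)
    have h3 := admBound_ge n k (j + 1)
    unfold stepF
    split_ifs <;> omega

/-- counting: `B_j` plus the number of `i ∈ (j,n]` with `k i < B_i` equals `n`. -/
lemma admBound_count (n : ℕ) {k : ℕ → ℕ} (H : Admissible n k) :
    ∀ j, j ≤ n →
      admBound n k j + ((Finset.Ioc j n).filter fun i => k i < admBound n k i).card = n := by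
  refine downInd (by simp [admBound_self]) ?_
  intro j hj ih
  have hins : Finset.Ioc j n = insert (j + 1) (Finset.Ioc (j + 1) n) := by
    ext i; simp [Finset.mem_Ioc]; omega
  have hnotmem : j + 1 ∉ Finset.Ioc (j + 1) n := by simp
  rw [admBound_rec n k hj, hins, Finset.filter_insert]
  have h1 := H (j + 1) (by omega) (by omega)
  have h3 := admBound_ge n k (j + 1)
  split_ifs with hc
  · rw [Finset.card_insert_of_notMem (fun hmem => hnotmem (Finset.mem_of_mem_filter _ hmem))]
    omega
  · omega

lemma phi_avoid (n : ℕ) {k : ℕ → ℕ} (Hk : ∀ i, 1 ≤ i → i ≤ n → k i ≤ n) {i : ℕ}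
    (hi : i ≤ n) :
    ∀ j x, j < i → x < n + j → phi n k j x ≠ phi n k i (n + i - 1 - k i) := by
  have key : ∀ d j x, j < i → x < n + j → i - j ≤ d →
      phi n k j x ≠ phi n k i (n + i - 1 - k i) := by
    intro d
    induction d with
    | zero => intro j x h1 _ h3; omega
    | succ d ih =>
      intro j x h1 h2 h3
      have hjn : j < n := by omega
      rw [phi_of_lt hjn]
      rcases eq_or_lt_of_le (show j + 1 ≤ i by omega) with he | hlt
      · subst he
        intro hcontra
        have hy := phi_inj n k (j + 1) hcontra
        have hk := Hk (j + 1) (by omega) hi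
        unfold stepF at hy
        split_ifs at hy <;> omega
      · have hs : stepF n k (j + 1) x ≤ x + 1 := by unfold stepF; split_ifs <;> omega
        exact ih (j + 1) (stepF n k (j + 1) x) (by omega) (by omega) (by omega)
  exact fun j x h1 h2 => key (i - j) j x h1 h2 le_rfl

lemma phi_congr (n : ℕ) {k k' : ℕ → ℕ} :
    ∀ j, (∀ i, j < i → i ≤ n → k i = k' i) → ∀ x, phi n k j x = phi n k' j x := by
  have key : ∀ d j, n - j ≤ d → (∀ i, j < i → i ≤ n → k i = k' i) →
      ∀ x, phi n k j x = phi n k' j x := by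
    intro d
    induction d with
    | zero => intro j h _ x; rw [phi_of_ge (by omega), phi_of_ge (by omega)]
    | succ d ih =>
      intro j h hagree x
      rcases le_or_gt n j with h' | h'
      · rw [phi_of_ge h', phi_of_ge h']
      · rw [phi_of_lt h', phi_of_lt h']
        have hk : k (j + 1) = k' (j + 1) := hagree (j + 1) (by omega) (by omega)
        have hstep : stepF n k (j + 1) x = stepF n k' (j + 1) x := by
          unfold stepF; rw [hk]
        rw [hstep]
        exact ih (j + 1) (by omega) (fun i hi1 hi2 => hagree i (by omega) hi2) _
  exact fun j h x => key (n - j) j le_rfl h x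

lemma admBound_congr (n : ℕ) {k k' : ℕ → ℕ} (j : ℕ)
    (h : ∀ i, j < i → i ≤ n → k i = k' i) : admBound n k j = admBound n k' j := by
  unfold admBound
  congr 1
  apply Finset.sup_congr rfl
  intro i hi
  simp only [Finset.mem_Ioc] at hi
  rw [h i hi.1 hi.2]

end AdmAux


namespace AdmAux

lemma sTrans_apply {m i : ℕ} (h1 : 1 ≤ i) (h2 : i < m) (x : Fin m) :
    ((sTrans m i x : Fin m) : ℕ) =
      if (x : ℕ) = i - 1 then i else if (x : ℕ) = i then i - 1 else (x : ℕ) := by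
  unfold sTrans
  rw [dif_pos ⟨h1, h2⟩]
  rcases eq_or_ne (x : ℕ) (i - 1) with hx1 | hx1
  · have : x = ⟨i - 1, by omega⟩ := Fin.ext hx1
    rw [this, Equiv.swap_apply_left, if_pos rfl]
  · rcases eq_or_ne (x : ℕ) i with hx2 | hx2
    · have : x = ⟨i, h2⟩ := Fin.ext hx2
      rw [this, Equiv.swap_apply_right]
      have : ¬ ((⟨i, h2⟩ : Fin m) : ℕ) = i - 1 := by simp only []; omega
      rw [if_neg this, if_pos rfl]
    · rw [Equiv.swap_apply_of_ne_of_ne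
        (fun h => hx1 (by rw [h])) (fun h => hx2 (by rw [h])),
        if_neg hx1, if_neg hx2]

lemma cyc_succ {n k j : ℕ} (h : k < j + n) :
    cyc n (k + 1) j = sTrans (2 * n) (j + n - (k + 1)) * cyc n k j := by
  unfold cyc
  rw [List.range_succ_eq_map, List.map_cons, List.prod_cons, List.map_map]
  congr 2
  apply List.map_congr_left
  intro t _
  simp only [Function.comp, Nat.succ_eq_add_one]
  congr 1
  omega

lemma cyc_apply {n j : ℕ} (hj1 : 1 ≤ j) (hjn : j ≤ n) :
    ∀ {k : ℕ}, k ≤ n → ∀ x : Fin (2 * n),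
      ((cyc n k j x : Fin (2 * n)) : ℕ) =
        if (x : ℕ) = j + n - 1 then j + n - 1 - k
        else if j + n - 1 - k ≤ (x : ℕ) ∧ (x : ℕ) ≤ j + n - 2 then (x : ℕ) + 1
        else (x : ℕ) := by
  intro k
  induction k with
  | zero =>
    intro _ x
    have hx := x.isLt
    show ((((List.range 0).map fun t => sTrans (2 * n) (j + n - 0 + t)).prod : Equiv.Perm _) x : ℕ) = _
    simp only [List.range_zero, List.map_nil, List.prod_nil]
    rw [Equiv.Perm.one_apply]
    split_ifs <;> omega
  | succ k ih =>
    intro hk x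
    have hx := x.isLt
    rw [cyc_succ (by omega), Equiv.Perm.mul_apply,
      sTrans_apply (by omega) (by omega), ih (by omega)]
    have hn1 : 1 ≤ n := by omega
    split_ifs <;> omega

/-- head part `c_{k_n,n} ⋯ c_{k_{j+1},j+1}` of the product. -/
def Vprod (n : ℕ) (k : ℕ → ℕ) (j : ℕ) : Equiv.Perm (Fin (2 * n)) :=
  ((List.range (n - j)).map fun t => cyc n (k (n - t)) (n - t)).prod

/-- tail part `c_{k_j,j} ⋯ c_{k_1,1}` of the product. -/
def Mprod (n : ℕ) (k : ℕ → ℕ) (j : ℕ) : Equiv.Perm (Fin (2 * n)) :=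
  ((List.range j).map fun t => cyc n (k (j - t)) (j - t)).prod

lemma Mprod_succ (n : ℕ) (k : ℕ → ℕ) (j : ℕ) :
    Mprod n k (j + 1) = cyc n (k (j + 1)) (j + 1) * Mprod n k j := by
  unfold Mprod
  rw [List.range_succ_eq_map, List.map_cons, List.prod_cons, List.map_map]
  congr 2
  apply List.map_congr_left
  intro t _
  simp only [Function.comp, Nat.succ_eq_add_one]
  have h1 : j + 1 - (t + 1) = j - t := by omega
  rw [h1]

lemma Vprod_succ (n : ℕ) (k : ℕ → ℕ) {j : ℕ} (hj : j < n) :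
    Vprod n k j = Vprod n k (j + 1) * cyc n (k (j + 1)) (j + 1) := by
  unfold Vprod
  have h1 : n - j = (n - j - 1) + 1 := by omega
  rw [h1, List.range_succ, List.map_append, List.prod_append]
  have h2 : n - j - 1 = n - (j + 1) := by omega
  have h3 : n - (n - j - 1) = j + 1 := by omega
  rw [List.map_singleton, List.prod_singleton, h3, h2]

lemma cycProd_decomp (n : ℕ) (k : ℕ → ℕ) :
    ∀ j, j ≤ n → cycProd n k = Vprod n k j * Mprod n k j := by
  refine downInd ?_ ?_
  · show cycProd n k = Vprod n k n * Mprod n k n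
    unfold Vprod Mprod cycProd
    rw [Nat.sub_self]
    simp
  · intro j hj ih
    rw [ih, Mprod_succ, Vprod_succ n k hj, mul_assoc]

lemma Mprod_fix (n : ℕ) {k : ℕ → ℕ} (Hk : ∀ i, 1 ≤ i → i ≤ n → k i ≤ n) :
    ∀ m, m ≤ n → ∀ x : Fin (2 * n), n + m - 1 < (x : ℕ) → Mprod n k m x = x := by
  intro m
  induction m with
  | zero =>
    intro _ x _
    unfold Mprod
    simp
  | succ m ih =>
    intro hm x hx
    have hx2 := x.isLt
    rw [Mprod_succ, Equiv.Perm.mul_apply, ih (by omega) x (by omega)]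
    apply Fin.ext
    rw [cyc_apply (by omega) (by omega) (Hk (m + 1) (by omega) (by omega)) x]
    split_ifs <;> omega

lemma Vprod_phi (n : ℕ) {k : ℕ → ℕ} (Hk : ∀ i, 1 ≤ i → i ≤ n → k i ≤ n) :
    ∀ j, j ≤ n → ∀ x : Fin (2 * n), (x : ℕ) < n + j →
      ((Vprod n k j x : Fin (2 * n)) : ℕ) = phi n k j (x : ℕ) := by
  refine downInd ?_ ?_
  · intro x _
    unfold Vprod
    rw [Nat.sub_self, phi_of_ge le_rfl]
    simp
  · intro j hj ih x hx
    have hx2 := x.isLt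
    rw [Vprod_succ n k hj, Equiv.Perm.mul_apply]
    have hk1 := Hk (j + 1) (by omega) (by omega)
    have hcy := cyc_apply (show 1 ≤ j + 1 by omega) (show j + 1 ≤ n by omega) hk1 x
    set y := cyc n (k (j + 1)) (j + 1) x with hy
    have hyval : (y : ℕ) = stepF n k (j + 1) (x : ℕ) := by
      rw [hcy]; unfold stepF; split_ifs <;> omega
    rw [phi_of_lt hj, ← hyval]
    have hylt : (y : ℕ) < n + (j + 1) := by
      rw [hyval]; unfold stepF; split_ifs <;> omega
    rw [ih y hylt, hyval]

/-- the action of the full product on the high positions. -/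
lemma cycProd_apply (n : ℕ) {k : ℕ → ℕ} (Hk : ∀ i, 1 ≤ i → i ≤ n → k i ≤ n) {j : ℕ}
    (hj1 : 1 ≤ j) (hjn : j ≤ n) (x : Fin (2 * n)) (hx : (x : ℕ) = n + j - 1) :
    ((cycProd n k x : Fin (2 * n)) : ℕ) = phi n k j (n + j - 1 - k j) := by
  have hx2 := x.isLt
  have hn : 1 ≤ n := by omega
  rw [cycProd_decomp n k j hjn, Equiv.Perm.mul_apply]
  have hj' : j = (j - 1) + 1 := by omega
  rw [hj', Mprod_succ, Equiv.Perm.mul_apply, ← hj']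
  rw [Mprod_fix n Hk (j - 1) (by omega) x (by omega)]
  have hkj := Hk j hj1 hjn
  have hcy := cyc_apply hj1 hjn hkj x
  rw [if_pos (by omega)] at hcy
  have hj'' : j - 1 + 1 = j := by omega
  rw [hj''] at *
  set y := cyc n (k j) j x with hy
  have hyval : (y : ℕ) = j + n - 1 - k j := hcy
  have hylt : (y : ℕ) < n + j := by omega
  rw [Vprod_phi n Hk j hjn y hylt, hyval]
  congr 1
  omega

end AdmAux

namespace AdmAux

/-- The double-coset invariant: the value of `σ` at a (high) point, recorded only if high. -/
def Fv (n : ℕ) (σ : Equiv.Perm (Fin (2 * n))) (p : Fin (2 * n)) : ℕ :=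
  if n ≤ ((σ p : Fin (2 * n)) : ℕ) then ((σ p : Fin (2 * n)) : ℕ) + 1 else 0

def Feq (n : ℕ) (σ τ : Equiv.Perm (Fin (2 * n))) : Prop :=
  ∀ p : Fin (2 * n), n ≤ (p : ℕ) → Fv n σ p = Fv n τ p

lemma one_mem_Sfix (n : ℕ) : (1 : Equiv.Perm (Fin (2 * n))) ∈ Sfix n := fun _ _ => rfl

lemma mul_mem_Sfix {n : ℕ} {g h : Equiv.Perm (Fin (2 * n))} (hg : g ∈ Sfix n)
    (hh : h ∈ Sfix n) : g * h ∈ Sfix n := by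
  intro i hi
  rw [Equiv.Perm.mul_apply, hh i hi, hg i hi]

lemma inv_mem_Sfix {n : ℕ} {g : Equiv.Perm (Fin (2 * n))} (hg : g ∈ Sfix n) :
    g⁻¹ ∈ Sfix n := by
  intro i hi
  have := hg i hi
  conv_lhs => rw [← this]
  rw [Equiv.Perm.inv_def, Equiv.symm_apply_apply]

lemma Sfix_low {n : ℕ} {g : Equiv.Perm (Fin (2 * n))} (hg : g ∈ Sfix n) {x : Fin (2 * n)}
    (hx : (x : ℕ) < n) : ((g x : Fin (2 * n)) : ℕ) < n := by
  by_contra hcon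
  have h2 : g (g x) = g x := hg (g x) (by omega)
  have := g.injective h2
  rw [this] at hcon
  omega

lemma dcoset_self (n : ℕ) (σ : Equiv.Perm (Fin (2 * n))) : σ ∈ dcoset n σ :=
  ⟨1, one_mem_Sfix n, 1, one_mem_Sfix n, by group⟩

lemma dcoset_eq_of_mul {n : ℕ} {g h : Equiv.Perm (Fin (2 * n))} (hg : g ∈ Sfix n)
    (hh : h ∈ Sfix n) (σ : Equiv.Perm (Fin (2 * n))) :
    dcoset n (g * σ * h) = dcoset n σ := by
  ext t
  constructor
  · rintro ⟨g', hg', h', hh', rfl⟩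
    exact ⟨g' * g, mul_mem_Sfix hg' hg, h * h', mul_mem_Sfix hh hh', by group⟩
  · rintro ⟨g', hg', h', hh', rfl⟩
    exact ⟨g' * g⁻¹, mul_mem_Sfix hg' (inv_mem_Sfix hg), h⁻¹ * h',
      mul_mem_Sfix (inv_mem_Sfix hh) hh', by group⟩

lemma Feq_of_mul {n : ℕ} {g h : Equiv.Perm (Fin (2 * n))} (hg : g ∈ Sfix n)
    (hh : h ∈ Sfix n) (σ : Equiv.Perm (Fin (2 * n))) : Feq n (g * σ * h) σ := by
  intro p hp
  unfold Fv
  have h1 : (g * σ * h) p = g (σ p) := by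
    rw [Equiv.Perm.mul_apply, Equiv.Perm.mul_apply, hh p hp]
  rw [h1]
  rcases le_or_gt n ((σ p : Fin (2 * n)) : ℕ) with hc | hc
  · rw [hg (σ p) hc]
  · have h2 := Sfix_low hg hc
    rw [if_neg (by omega), if_neg (by omega)]

/-- `F σ = F τ` implies that `σ` and `τ` lie in the same double coset. -/
lemma dcoset_eq_of_Feq {n : ℕ} (hn : 1 ≤ n) :
    ∀ N (σ τ : Equiv.Perm (Fin (2 * n))),
      (Finset.univ.filter fun p : Fin (2 * n) => n ≤ (p : ℕ) ∧ σ p ≠ τ p).card ≤ N →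
      Feq n σ τ → dcoset n σ = dcoset n τ := by
  intro N
  induction N with
  | zero =>
    intro σ τ hcard hF
    have hagree : ∀ p : Fin (2 * n), n ≤ (p : ℕ) → σ p = τ p := by
      intro p hp
      by_contra hne
      have : p ∈ Finset.univ.filter fun p : Fin (2 * n) => n ≤ (p : ℕ) ∧ σ p ≠ τ p := by
        simp [hp, hne]
      have := Finset.card_pos.2 ⟨p, this⟩
      omega
    have hmem : σ⁻¹ * τ ∈ Sfix n := by
      intro p hp
      rw [Equiv.Perm.mul_apply, ← hagree p hp, Equiv.Perm.inv_def, Equiv.symm_apply_apply]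
    have : τ = 1 * σ * (σ⁻¹ * τ) := by group
    rw [this, dcoset_eq_of_mul (one_mem_Sfix n) hmem]
  | succ N ih =>
    intro σ τ hcard hF
    by_cases h0 : (Finset.univ.filter fun p : Fin (2 * n) => n ≤ (p : ℕ) ∧ σ p ≠ τ p).card = 0
    · exact ih σ τ (by omega) hF
    · obtain ⟨p₀, hp₀⟩ := Finset.card_pos.1
        (show 0 < (Finset.univ.filter fun p : Fin (2 * n) => n ≤ (p : ℕ) ∧ σ p ≠ τ p).card by omega)
      simp only [Finset.mem_filter, Finset.mem_univ, true_and] at hp₀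
      obtain ⟨hp₀n, hp₀ne⟩ := hp₀
      have hFp := hF p₀ hp₀n
      unfold Fv at hFp
      -- both values are low
      have hlow : ((σ p₀ : Fin (2 * n)) : ℕ) < n ∧ ((τ p₀ : Fin (2 * n)) : ℕ) < n := by
        rcases le_or_gt n ((σ p₀ : Fin (2 * n)) : ℕ) with h1 | h1 <;>
          rcases le_or_gt n ((τ p₀ : Fin (2 * n)) : ℕ) with h2 | h2
        · rw [if_pos h1, if_pos h2] at hFp
          exact absurd (Fin.ext (by omega : ((σ p₀ : Fin (2 * n)) : ℕ) = (τ p₀ : Fin (2 * n)))) hp₀ne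
        · rw [if_pos h1, if_neg (by omega)] at hFp; omega
        · rw [if_neg (by omega), if_pos h2] at hFp; omega
        · exact ⟨h1, h2⟩
      set g₀ := Equiv.swap (σ p₀) (τ p₀) with hg₀
      have hg₀mem : g₀ ∈ Sfix n := by
        intro i hi
        apply Equiv.swap_apply_of_ne_of_ne
        · intro hcon; rw [hcon] at hi; omega
        · intro hcon; rw [hcon] at hi; omega
      have hkey : ∀ p : Fin (2 * n), n ≤ (p : ℕ) → σ p = τ p → (g₀ * σ) p = τ p := by
        intro p hp heq
        rw [Equiv.Perm.mul_apply, heq]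
        apply Equiv.swap_apply_of_ne_of_ne
        · intro hcon
          rw [← heq] at hcon
          have h' := σ.injective hcon
          exact hp₀ne (h' ▸ heq)
        · intro hcon
          have h' := τ.injective hcon
          exact hp₀ne (h' ▸ heq)
      have hFeq' : Feq n (g₀ * σ) τ := by
        intro p hp
        have hF2 := hF p hp
        unfold Fv at hF2 ⊢
        rw [Equiv.Perm.mul_apply]
        rcases le_or_gt n ((σ p : Fin (2 * n)) : ℕ) with hc | hc
        · rw [hg₀mem (σ p) hc]; exact hF2
        · have h2 := Sfix_low hg₀mem hc
          rw [if_neg (by omega)]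
          rw [if_neg (by omega)] at hF2
          exact hF2
      have hsubset : (Finset.univ.filter fun p : Fin (2 * n) => n ≤ (p : ℕ) ∧ (g₀ * σ) p ≠ τ p)
          ⊂ (Finset.univ.filter fun p : Fin (2 * n) => n ≤ (p : ℕ) ∧ σ p ≠ τ p) := by
        constructor
        · intro p hp
          simp only [Finset.mem_filter, Finset.mem_univ, true_and] at hp ⊢
          refine ⟨hp.1, fun heq => hp.2 (hkey p hp.1 heq)⟩
        · intro hcon
          have hp₀mem : p₀ ∈ (Finset.univ.filter fun p : Fin (2 * n) => n ≤ (p : ℕ) ∧ σ p ≠ τ p) := by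
            simp [hp₀n, hp₀ne]
          have := hcon hp₀mem
          simp only [Finset.mem_filter, Finset.mem_univ, true_and] at this
          apply this.2
          rw [Equiv.Perm.mul_apply, hg₀, Equiv.swap_apply_left]
      have hcard' := Finset.card_lt_card hsubset
      have hdc := ih (g₀ * σ) τ (by omega) hFeq'
      have : g₀ * σ = g₀ * σ * 1 := by group
      rw [← hdc, this, dcoset_eq_of_mul hg₀mem (one_mem_Sfix n)]

end AdmAux

namespace AdmAux

/-- value of a permutation at a position given as a natural number. -/
def svalF (n : ℕ) (σ : Equiv.Perm (Fin (2 * n))) (p : ℕ) : ℕ :=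
  if h : p < 2 * n then ((σ ⟨p, h⟩ : Fin (2 * n)) : ℕ) else 0

lemma svalF_lt {n : ℕ} (σ : Equiv.Perm (Fin (2 * n))) {p : ℕ} (hp : p < 2 * n) :
    svalF n σ p < 2 * n := by
  unfold svalF
  rw [dif_pos hp]
  exact (σ ⟨p, hp⟩).isLt

lemma svalF_inj {n : ℕ} (σ : Equiv.Perm (Fin (2 * n))) {p q : ℕ} (hp : p < 2 * n)
    (hq : q < 2 * n) (h : svalF n σ p = svalF n σ q) : p = q := by
  unfold svalF at h
  rw [dif_pos hp, dif_pos hq] at h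
  have := σ.injective (Fin.ext h : σ ⟨p, hp⟩ = σ ⟨q, hq⟩)
  exact congrArg Fin.val this

end AdmAux


/-- The assignment `[k_n, …, k_1] ↦ O_{c_{k_n,n} ⋯ c_{k_1,1}}` is a bijection from admissible
sequences of length `n` onto the set of double cosets of `S` in `S_{2n}`: every double coset
`O_σ` arises from exactly one admissible sequence (normalized to vanish outside `1, …, n`). -/
theorem admissible_bijection_dcosets (n : ℕ) (hn : 1 ≤ n) (σ : Equiv.Perm (Fin (2 * n))) :
    ∃! k : ℕ → ℕ, (∀ j, (j = 0 ∨ n < j) → k j = 0) ∧ Admissible n k ∧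
      dcoset n (cycProd n k) = dcoset n σ := by
  classical
  open AdmAux in
  set sv : ℕ → ℕ := AdmAux.svalF n σ with hsv
  -- Step 1: existence of an admissible sequence matching the invariant of σ.
  have main : ∀ d, d ≤ n → ∃ k : ℕ → ℕ,
      (∀ j, j ≤ n - d ∨ n < j → k j = 0) ∧ Admissible n k ∧
      (∀ j, n - d < j → j ≤ n →
        ((n ≤ sv (n + j - 1) ∧ AdmAux.phi n k j (n + j - 1 - k j) = sv (n + j - 1)) ∨
         (sv (n + j - 1) < n ∧ k j = admBound n k j))) := by
    intro d
    induction d with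
    | zero =>
      intro _
      exact ⟨fun _ => 0, fun j _ => rfl, fun j _ _ => Nat.zero_le _,
        fun j h1 h2 => absurd h1 (by omega)⟩
    | succ d ih =>
      intro hd
      obtain ⟨k, hzero, hadm, hprop⟩ := ih (by omega)
      set j₀ := n - d with hj₀def
      have hj₀1 : 1 ≤ j₀ := by omega
      have hj₀n : j₀ ≤ n := by omega
      have Hkle : ∀ i, 1 ≤ i → i ≤ n → k i ≤ n := fun i h1 h2 => AdmAux.k_le n hadm h1 h2
      have hBle := AdmAux.admBound_le n hadm j₀ hj₀n
      have hBge := AdmAux.admBound_ge n k j₀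
      -- facts independent of the two cases, for k' := update k j₀ v
      have hupdate : ∀ v : ℕ,
          (∀ i, j₀ < i → i ≤ n → Function.update k j₀ v i = k i) := by
        intro v i h1 _
        exact Function.update_of_ne (show i ≠ j₀ by omega) v k
      have hphiupd : ∀ v j, j₀ ≤ j →
          (∀ x, AdmAux.phi n (Function.update k j₀ v) j x = AdmAux.phi n k j x) := by
        intro v j hj x
        exact AdmAux.phi_congr n j (fun i hi1 hi2 => hupdate v i (by omega) hi2) x
      have hBupd : ∀ v j, j₀ ≤ j →
          admBound n (Function.update k j₀ v) j = admBound n k j := by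
        intro v j hj
        exact AdmAux.admBound_congr n j (fun i hi1 hi2 => hupdate v i (by omega) hi2)
      have hzero' : ∀ v j, (j ≤ n - (d + 1) ∨ n < j) → Function.update k j₀ v j = 0 := by
        intro v j hj
        rw [Function.update_of_ne (show j ≠ j₀ by omega) v k]
        exact hzero j (by omega)
      have hadm' : ∀ v, v ≤ admBound n k j₀ → Admissible n (Function.update k j₀ v) := by
        intro v hv j h1 h2
        rcases lt_trichotomy j j₀ with hc | hc | hc
        · rw [Function.update_of_ne (show j ≠ j₀ by omega) v k, hzero j (by omega)]
          exact Nat.zero_le _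
        · subst hc
          rw [Function.update_self, hBupd v j₀ le_rfl]
          exact hv
        · rw [Function.update_of_ne (show j ≠ j₀ by omega) v k, hBupd v j (by omega)]
          exact hadm j h1 h2
      have hpropold : ∀ v j, j₀ < j → j ≤ n →
          ((n ≤ sv (n + j - 1) ∧
             AdmAux.phi n (Function.update k j₀ v) j
               (n + j - 1 - Function.update k j₀ v j) = sv (n + j - 1)) ∨
           (sv (n + j - 1) < n ∧
             Function.update k j₀ v j = admBound n (Function.update k j₀ v) j)) := by
        intro v j h1 h2
        rw [hupdate v j h1 h2, hphiupd v j (by omega), hBupd v j (by omega)]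
        exact hprop j (by omega) h2
      rcases lt_or_ge (sv (n + j₀ - 1)) n with hlow | hhigh
      · -- case A : σ is low at position n+j₀-1; take k j₀ := admBound
        refine ⟨Function.update k j₀ (admBound n k j₀), hzero' _,
          hadm' _ le_rfl, ?_⟩
        intro j h1 h2
        rcases eq_or_lt_of_le (show j₀ ≤ j by omega) with he | hlt
        · subst he
          right
          rw [Function.update_self, hBupd _ j₀ le_rfl]
          exact ⟨hlow, rfl⟩
        · exact hpropold _ j hlt h2
      · -- case B : σ is high at position n+j₀-1
        set B₀ := admBound n k j₀ with hB₀def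
        have hfilter : ((Finset.Ioc j₀ n).filter fun i => k i < admBound n k i)
            = ((Finset.Ioc j₀ n).filter fun i => n ≤ sv (n + i - 1)) := by
          apply Finset.filter_congr
          intro i hi
          simp only [Finset.mem_Ioc] at hi
          have hkB := hadm i (by omega) hi.2
          have hBi := AdmAux.admBound_le n hadm i hi.2
          have hkey := AdmAux.phi_lt_iff n hadm i hi.2 (n + i - 1 - k i)
          have hki := Hkle i (by omega) hi.2
          constructor
          · intro hik
            rcases hprop i (by omega) hi.2 with ⟨hh, _⟩ | ⟨_, hkB'⟩
            · exact hh
            · omega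
          · intro hsvi
            rcases hprop i (by omega) hi.2 with ⟨_, hphi⟩ | ⟨hl, _⟩
            · have : ¬ AdmAux.phi n k i (n + i - 1 - k i) < n := by omega
              omega
            · omega
        set taken := ((Finset.Ioc j₀ n).filter fun i => n ≤ sv (n + i - 1)).image
          (fun i => sv (n + i - 1)) with htakendef
        have htaken_sub : taken ⊆ Finset.Ico n (2 * n) := by
          intro v hv
          rw [htakendef, Finset.mem_image] at hv
          obtain ⟨i, hi, rfl⟩ := hv
          simp only [Finset.mem_filter, Finset.mem_Ioc] at hi
          rw [Finset.mem_Ico]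
          exact ⟨hi.2, AdmAux.svalF_lt σ (by omega)⟩
        have hcard_taken : taken.card
            = ((Finset.Ioc j₀ n).filter fun i => n ≤ sv (n + i - 1)).card := by
          rw [htakendef]
          apply Finset.card_image_of_injOn
          intro i hi i' hi' heq
          simp only [Finset.mem_coe, Finset.mem_filter, Finset.mem_Ioc] at hi hi'
          have := AdmAux.svalF_inj σ (show n + i - 1 < 2 * n by omega)
            (show n + i' - 1 < 2 * n by omega) heq
          omega
        have hcount := AdmAux.admBound_count n hadm j₀ hj₀n
        have hAvail_card : (Finset.Ico n (2 * n) \ taken).card = B₀ := by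
          rw [Finset.card_sdiff, Finset.inter_eq_left.2 htaken_sub, Nat.card_Ico, hcard_taken, ← hfilter]
          omega
        set Im := (Finset.Ico (n + j₀ - B₀) (n + j₀)).image (AdmAux.phi n k j₀) with hImdef
        have hIm_card : Im.card = B₀ := by
          rw [hImdef, Finset.card_image_of_injective _ (AdmAux.phi_inj n k j₀), Nat.card_Ico]
          omega
        have hIm_sub : Im ⊆ Finset.Ico n (2 * n) \ taken := by
          intro v hv
          rw [hImdef, Finset.mem_image] at hv
          obtain ⟨x, hx, rfl⟩ := hv
          rw [Finset.mem_Ico] at hx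
          rw [Finset.mem_sdiff, Finset.mem_Ico]
          have hkey := AdmAux.phi_lt_iff n hadm j₀ hj₀n x
          have hle := AdmAux.phi_le (n := n) k j₀ x
          refine ⟨⟨by omega, by omega⟩, ?_⟩
          intro hcon
          rw [htakendef, Finset.mem_image] at hcon
          obtain ⟨i, hi, heq⟩ := hcon
          simp only [Finset.mem_filter, Finset.mem_Ioc] at hi
          rcases hprop i (by omega) hi.1.2 with ⟨_, hphi⟩ | ⟨hl, _⟩
          · rw [← hphi] at heq
            exact AdmAux.phi_avoid n Hkle hi.1.2 j₀ x hi.1.1 (by omega) heq.symm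
          · omega
        have hIm_eq : Im = Finset.Ico n (2 * n) \ taken :=
          Finset.eq_of_subset_of_card_le hIm_sub (by rw [hAvail_card, hIm_card])
        have htmem : sv (n + j₀ - 1) ∈ Finset.Ico n (2 * n) \ taken := by
          rw [Finset.mem_sdiff, Finset.mem_Ico]
          refine ⟨⟨hhigh, AdmAux.svalF_lt σ (by omega)⟩, ?_⟩
          intro hcon
          rw [htakendef, Finset.mem_image] at hcon
          obtain ⟨i, hi, heq⟩ := hcon
          simp only [Finset.mem_filter, Finset.mem_Ioc] at hi
          have := AdmAux.svalF_inj σ (show n + i - 1 < 2 * n by omega)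
            (show n + j₀ - 1 < 2 * n by omega) heq
          omega
        rw [← hIm_eq, hImdef, Finset.mem_image] at htmem
        obtain ⟨x, hxmem, hphix⟩ := htmem
        rw [Finset.mem_Ico] at hxmem
        refine ⟨Function.update k j₀ (n + j₀ - 1 - x), hzero' _, hadm' _ (by omega), ?_⟩
        intro j h1 h2
        rcases eq_or_lt_of_le (show j₀ ≤ j by omega) with he | hlt
        · subst he
          left
          refine ⟨hhigh, ?_⟩
          rw [Function.update_self, hphiupd _ j₀ le_rfl]
          have hxe : n + j₀ - 1 - (n + j₀ - 1 - x) = x := by omega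
          rw [hxe]
          exact hphix
        · exact hpropold _ j hlt h2
  -- extract the sequence
  obtain ⟨k, hzero, hadm, hprop⟩ := main n le_rfl
  have Hkle : ∀ i, 1 ≤ i → i ≤ n → k i ≤ n := fun i h1 h2 => AdmAux.k_le n hadm h1 h2
  -- Step 2: Feq (cycProd n k) σ
  have hFeq : AdmAux.Feq n (cycProd n k) σ := by
    intro p hp
    have hp2 := p.isLt
    set j := (p : ℕ) + 1 - n with hjdef
    have hj1 : 1 ≤ j := by omega
    have hjn : j ≤ n := by omega
    have hpval : (p : ℕ) = n + j - 1 := by omega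
    have hw := AdmAux.cycProd_apply n Hkle hj1 hjn p hpval
    have hsvp : sv (n + j - 1) = ((σ p : Fin (2 * n)) : ℕ) := by
      rw [hsv]
      unfold AdmAux.svalF
      rw [dif_pos (by omega : n + j - 1 < 2 * n)]
      congr 2
      exact Fin.ext hpval.symm
    unfold AdmAux.Fv
    rw [hw]
    rcases hprop j (by omega) hjn with ⟨hh, hphi⟩ | ⟨hl, hkB⟩
    · rw [hphi, hsvp]
    · have hkey := AdmAux.phi_lt_iff n hadm j hjn (n + j - 1 - k j)
      have hBle := AdmAux.admBound_le n hadm j hjn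
      have hBge := AdmAux.admBound_ge n k j
      rw [if_neg (by omega), if_neg (by omega)]
  have hdc : dcoset n (cycProd n k) = dcoset n σ :=
    AdmAux.dcoset_eq_of_Feq hn _ (cycProd n k) σ le_rfl hFeq
  -- Step 3: uniqueness
  refine ⟨k, ⟨fun j hj => hzero j (by omega), hadm, hdc⟩, ?_⟩
  rintro k' ⟨hz', hadm', hdc'⟩
  have Hkle' : ∀ i, 1 ≤ i → i ≤ n → k' i ≤ n := fun i h1 h2 => AdmAux.k_le n hadm' h1 h2
  have hmem : cycProd n k' ∈ dcoset n (cycProd n k) := by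
    rw [hdc, ← hdc']
    exact AdmAux.dcoset_self n (cycProd n k')
  obtain ⟨g, hg, h, hh, heq⟩ := hmem
  have hFeq' : AdmAux.Feq n (cycProd n k') (cycProd n k) := by
    rw [heq]
    exact AdmAux.Feq_of_mul hg hh (cycProd n k)
  have huniq : ∀ j, j ≤ n → ∀ i, j < i → i ≤ n → k' i = k i := by
    refine AdmAux.downInd (fun i h1 h2 => absurd h1 (by omega)) ?_
    intro j hjn ihj i hji hin
    rcases eq_or_lt_of_le (show j + 1 ≤ i by omega) with he | hlt
    swap
    · exact ihj i (by omega) hin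
    subst he
    set m := j + 1 with hmdef
    have hphieqf : ∀ x, AdmAux.phi n k' m x = AdmAux.phi n k m x :=
      AdmAux.phi_congr n m (fun i hi1 hi2 => ihj i hi1 hi2)
    have hBeq : admBound n k' m = admBound n k m :=
      AdmAux.admBound_congr n m (fun i hi1 hi2 => ihj i hi1 hi2)
    have hm1 : 1 ≤ m := by omega
    have hmn : m ≤ n := by omega
    set p : Fin (2 * n) := ⟨n + m - 1, by omega⟩ with hpdef
    have hFv := hFeq' p (by rw [hpdef]; simp only []; omega)
    have hw' := AdmAux.cycProd_apply n Hkle' hm1 hmn p (by rw [hpdef])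
    have hw := AdmAux.cycProd_apply n Hkle hm1 hmn p (by rw [hpdef])
    unfold AdmAux.Fv at hFv
    rw [hw, hw'] at hFv
    have hkey' := AdmAux.phi_lt_iff n hadm' m hmn (n + m - 1 - k' m)
    have hkey := AdmAux.phi_lt_iff n hadm m hmn (n + m - 1 - k m)
    have hkB' := hadm' m hm1 hmn
    have hkB := hadm m hm1 hmn
    have hBle' := AdmAux.admBound_le n hadm' m hmn
    have hBle := AdmAux.admBound_le n hadm m hmn
    rw [hphieqf] at hFv hkey'
    rw [hBeq] at hkey' hkB'
    rcases eq_or_lt_of_le hkB' with hc' | hc' <;> rcases eq_or_lt_of_le hkB with hc | hc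
    · omega
    · -- k' m = B but k m < B : contradiction via hFv
      rw [if_neg (by omega), if_pos (by omega)] at hFv
      omega
    · rw [if_pos (by omega), if_neg (by omega)] at hFv
      omega
    · rw [if_pos (by omega), if_pos (by omega)] at hFv
      have := AdmAux.phi_inj n k m (show AdmAux.phi n k m (n + m - 1 - k' m)
        = AdmAux.phi n k m (n + m - 1 - k m) by omega)
      omega
  funext i
  rcases (by omega : i = 0 ∨ (1 ≤ i ∧ i ≤ n) ∨ n < i) with hc | hc | hc
  · rw [hz' i (Or.inl hc), hzero i (by omega)]
  · exact huniq 0 (by omega) i (by omega) hc.2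
  · rw [hz' i (Or.inr hc), hzero i (by omega)]
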